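/- Let G be cyclic of order 2^k with k ≥ 2, and let N be the unique subgroup of order 2^m with 2 ≤ m < k. Then the subgroup of Aut(G) consisting of automorphisms that fix N pointwise is cyclic of order 2^(k-m). -/

import Mathlib

private lemma aux_pow (m : ℕ) (hm : 2 ≤ m) (j : ℕ) :
    ∃ w : ℤ, Odd w ∧ (1 + 2 ^ m : ℤ) ^ (2 ^ j) = 1 + 2 ^ (m + j) * w := by
  induction j with
  | zero => exact ⟨1, odd_one, by ring⟩
  | succ j ih =>
    obtain ⟨w, hw, he⟩ := ih
    refine ⟨w + 2 ^ (m + j - 1) * w ^ 2, ?_, ?_⟩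
    · have h1 : Even ((2 : ℤ) ^ (m + j - 1) * w ^ 2) := by
        refine Even.mul_right ?_ _
        have : (2 : ℤ) ^ (m + j - 1) = 2 * 2 ^ (m + j - 2) := by
          rw [← pow_succ']; congr 1; omega
        exact ⟨2 ^ (m + j - 2), by rw [this]; ring⟩
      exact hw.add_even h1
    · have h2 : (2 : ℤ) ^ (m + j) * 2 ^ (m + j) = 2 ^ (m + (j + 1)) * 2 ^ (m + j - 1) := by
        rw [← pow_add, ← pow_add]; congr 1; omega
      calc (1 + 2 ^ m : ℤ) ^ 2 ^ (j + 1) = ((1 + 2 ^ m) ^ 2 ^ j) ^ 2 := by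
            rw [← pow_mul, pow_succ]
        _ = 1 + 2 ^ (m + (j+1)) * w + (2 ^ (m+j) * 2 ^ (m+j)) * w ^ 2 := by
            have h3 : (2:ℤ)^(m+(j+1)) = 2^(m+j)*2 := by rw [← pow_succ]; ring_nf
            rw [he, h3]; ring
        _ = 1 + 2 ^ (m + (j + 1)) * (w + 2 ^ (m + j - 1) * w ^ 2) := by
            rw [h2]; ring

private lemma aux_order (k m : ℕ) (hm : 2 ≤ m) (hmk : m < k) :
    orderOf (((1 + 2 ^ m : ℕ) : ZMod (2 ^ k))) = 2 ^ (k - m) := by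
  haveI : NeZero (2 ^ k) := ⟨by positivity⟩
  have hcast : (((1 + 2 ^ m : ℕ)) : ZMod (2 ^ k)) = ((1 + 2 ^ m : ℤ) : ZMod (2 ^ k)) := by
    push_cast; ring
  have hzero : ((2 ^ k : ℤ) : ZMod (2 ^ k)) = 0 := by
    rw [ZMod.intCast_zmod_eq_zero_iff_dvd]; exact_mod_cast dvd_refl _
  have h1 : (((1 + 2 ^ m : ℕ)) : ZMod (2 ^ k)) ^ (2 ^ (k - m)) = 1 := by
    obtain ⟨w, hw, he⟩ := aux_pow m hm (k - m)
    rw [hcast, ← Int.cast_pow, he]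
    have h : m + (k - m) = k := by omega
    rw [h]
    push_cast [hzero]
    ring
  have h2 : ¬ (((1 + 2 ^ m : ℕ)) : ZMod (2 ^ k)) ^ (2 ^ (k - m - 1)) = 1 := by
    obtain ⟨w, hw, he⟩ := aux_pow m hm (k - m - 1)
    rw [hcast, ← Int.cast_pow, he]
    have h : m + (k - m - 1) = k - 1 := by omega
    rw [h]
    intro hcontra
    have : ((2 ^ (k - 1) * w : ℤ) : ZMod (2 ^ k)) = 0 := by
      have := sub_eq_zero.mpr hcontra
      push_cast at this ⊢
      linear_combination this
    rw [ZMod.intCast_zmod_eq_zero_iff_dvd] at this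
    have hdvd : (2 : ℤ) ∣ w := by
      have hfac : ((2 ^ k : ℕ) : ℤ) = 2 ^ (k - 1) * 2 := by
        push_cast
        rw [← pow_succ]
        congr 1
        omega
      rw [hfac] at this
      obtain ⟨c, hc⟩ := this
      refine ⟨c, ?_⟩
      have h2pos : (0 : ℤ) < 2 ^ (k - 1) := by positivity
      have := mul_left_cancel₀ (ne_of_gt h2pos) (by linarith [hc] : (2 : ℤ) ^ (k - 1) * w = 2 ^ (k - 1) * (2 * c))
      linarith [this]
    obtain ⟨c, hc⟩ := hdvd
    exact (Int.not_odd_iff_even.mpr ⟨c, by omega⟩) hw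
  have hkm : k - m - 1 + 1 = k - m := by omega
  have := orderOf_eq_prime_pow (p := 2) (n := k - m - 1)
    (x := (((1 + 2 ^ m : ℕ)) : ZMod (2 ^ k))) h2 (by rw [hkm]; exact h1)
  rw [this, hkm]

private lemma aux_K (k m : ℕ) (hm : 2 ≤ m) (hmk : m < k) :
    IsCyclic (ZMod.unitsMap (pow_dvd_pow 2 hmk.le) : (ZMod (2 ^ k))ˣ →* (ZMod (2 ^ m))ˣ).ker ∧
      Nat.card (ZMod.unitsMap (pow_dvd_pow 2 hmk.le) : (ZMod (2 ^ k))ˣ →* (ZMod (2 ^ m))ˣ).ker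
        = 2 ^ (k - m) := by
  haveI : NeZero (2 ^ k) := ⟨by positivity⟩
  haveI : NeZero (2 ^ m) := ⟨by positivity⟩
  set f := (ZMod.unitsMap (pow_dvd_pow 2 hmk.le) : (ZMod (2 ^ k))ˣ →* (ZMod (2 ^ m))ˣ) with hf
  have hsurj : Function.Surjective f := ZMod.unitsMap_surjective _
  have hcard : Nat.card f.ker = 2 ^ (k - m) := by
    have h1 : Nat.card (ZMod (2 ^ k))ˣ = Nat.card ((ZMod (2 ^ k))ˣ ⧸ f.ker) * Nat.card f.ker :=
      Subgroup.card_eq_card_quotient_mul_card_subgroup f.ker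
    have h2 : Nat.card ((ZMod (2 ^ k))ˣ ⧸ f.ker) = Nat.card (ZMod (2 ^ m))ˣ :=
      Nat.card_congr (QuotientGroup.quotientKerEquivOfSurjective f hsurj).toEquiv
    have h3 : Nat.card (ZMod (2 ^ k))ˣ = 2 ^ (k - 1) := by
      rw [Nat.card_eq_fintype_card, ZMod.card_units_eq_totient,
        Nat.totient_prime_pow Nat.prime_two (by omega)]
      simp
    have h4 : Nat.card (ZMod (2 ^ m))ˣ = 2 ^ (m - 1) := by
      rw [Nat.card_eq_fintype_card, ZMod.card_units_eq_totient,
        Nat.totient_prime_pow Nat.prime_two (by omega)]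
      simp
    rw [h2, h3, h4] at h1
    have h5 : (2 : ℕ) ^ (k - 1) = 2 ^ (m - 1) * 2 ^ (k - m) := by
      rw [← pow_add]; congr 1; omega
    rw [h5] at h1
    exact (Nat.eq_of_mul_eq_mul_left (by positivity) h1.symm)
  refine ⟨?_, hcard⟩
  have hco : Nat.Coprime (1 + 2 ^ m) (2 ^ k) := by
    apply Nat.Coprime.pow_right
    have h2m : 2 ∣ 2 ^ m := dvd_pow_self 2 (by omega)
    exact (Nat.coprime_comm.mp ((Nat.prime_two.coprime_iff_not_dvd).mpr (by omega)))
  set u : (ZMod (2 ^ k))ˣ := ZMod.unitOfCoprime _ hco with hu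
  have humem : u ∈ f.ker := by
    rw [MonoidHom.mem_ker]
    ext
    rw [hf]
    show (ZMod.castHom (pow_dvd_pow 2 hmk.le) (ZMod (2 ^ m))) (u : ZMod (2 ^ k)) = 1
    have : (u : ZMod (2 ^ k)) = ((1 + 2 ^ m : ℕ) : ZMod (2 ^ k)) := ZMod.coe_unitOfCoprime _ hco
    rw [this, map_natCast, Nat.cast_add, Nat.cast_one, ZMod.natCast_self, add_zero]
  have horder : orderOf (⟨u, humem⟩ : f.ker) = 2 ^ (k - m) := by
    rw [Subgroup.orderOf_mk, ← orderOf_units]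
    show orderOf ((u : ZMod (2 ^ k))) = 2 ^ (k - m)
    rw [show (u : ZMod (2 ^ k)) = ((1 + 2 ^ m : ℕ) : ZMod (2 ^ k)) from
      ZMod.coe_unitOfCoprime _ hco]
    exact aux_order k m hm hmk
  exact isCyclic_of_orderOf_eq_card _ (by rw [horder, hcard])

private lemma aux_fix (k m : ℕ) (hm : 2 ≤ m) (hmk : m < k) (c : ZMod (2 ^ k)) :
    (∀ x : ZMod (2 ^ k), ((2 ^ m : ℕ) : ZMod (2 ^ k)) * x = 0 → c * x = x) ↔
      ZMod.castHom (pow_dvd_pow 2 hmk.le) (ZMod (2 ^ m)) c = 1 := by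
  haveI : NeZero (2 ^ k) := ⟨by positivity⟩
  have hval : ∀ y : ZMod (2 ^ k), ((y.val : ℕ) : ZMod (2 ^ k)) = y := fun y => by
    rw [ZMod.natCast_val, ZMod.cast_id]
  have hsplit : (2 : ℤ) ^ k = 2 ^ m * 2 ^ (k - m) := by
    rw [← pow_add]; congr 1; omega
  have hcastiff : ZMod.castHom (pow_dvd_pow 2 hmk.le) (ZMod (2 ^ m)) c = 1 ↔
      (2 ^ m : ℤ) ∣ ((c.val : ℤ) - 1) := by
    rw [ZMod.castHom_apply, ← ZMod.natCast_val]
    constructor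
    · intro h
      have h0 : (((c.val : ℤ) - 1 : ℤ) : ZMod (2 ^ m)) = 0 := by
        push_cast
        rw [show ((c.val : ZMod (2 ^ m))) = 1 from h]
        ring
      rw [ZMod.intCast_zmod_eq_zero_iff_dvd] at h0
      exact_mod_cast h0
    · intro h
      have h0 : (((c.val : ℤ) - 1 : ℤ) : ZMod (2 ^ m)) = 0 := by
        rw [ZMod.intCast_zmod_eq_zero_iff_dvd]
        exact_mod_cast h
      push_cast at h0
      linear_combination h0
  rw [hcastiff]
  constructor
  · intro h
    have hx : ((2 ^ m : ℕ) : ZMod (2 ^ k)) * ((2 ^ (k - m) : ℕ) : ZMod (2 ^ k)) = 0 := by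
      rw [← Nat.cast_mul, ← pow_add, show m + (k - m) = k by omega, ZMod.natCast_self]
    have hfix := h _ hx
    have h0 : ((((c.val : ℤ) - 1) * 2 ^ (k - m) : ℤ) : ZMod (2 ^ k)) = 0 := by
      push_cast
      rw [hval c]
      push_cast at hfix
      linear_combination hfix
    rw [ZMod.intCast_zmod_eq_zero_iff_dvd] at h0
    have h0' : (2 : ℤ) ^ m * 2 ^ (k - m) ∣ ((c.val : ℤ) - 1) * 2 ^ (k - m) := by
      rw [← hsplit]; exact_mod_cast h0
    exact (mul_dvd_mul_iff_right (by positivity : (2:ℤ) ^ (k - m) ≠ 0)).mp h0'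
  · intro h x hx
    have hxv : (2 ^ (k - m) : ℤ) ∣ (x.val : ℤ) := by
      have h0 : ((2 ^ m * (x.val : ℤ) : ℤ) : ZMod (2 ^ k)) = 0 := by
        push_cast
        rw [hval x]
        push_cast at hx
        linear_combination hx
      rw [ZMod.intCast_zmod_eq_zero_iff_dvd] at h0
      have h0' : (2 : ℤ) ^ m * 2 ^ (k - m) ∣ 2 ^ m * (x.val : ℤ) := by
        rw [← hsplit]; exact_mod_cast h0
      exact (mul_dvd_mul_iff_left (by positivity : (2:ℤ) ^ m ≠ 0)).mp h0'
    have h0 : ((((c.val : ℤ) - 1) * (x.val : ℤ) : ℤ) : ZMod (2 ^ k)) = 0 := by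
      rw [ZMod.intCast_zmod_eq_zero_iff_dvd]
      push_cast
      rw [hsplit]
      exact mul_dvd_mul h hxv
    push_cast at h0
    rw [hval c, hval x] at h0
    linear_combination h0

private def mulAutMultiplicative (A : Type*) [AddGroup A] :
    MulAut (Multiplicative A) ≃* Multiplicative (AddAut A) where
  toFun σ := Multiplicative.ofAdd (AddEquiv.toMultiplicative.symm σ)
  invFun f := AddEquiv.toMultiplicative (Multiplicative.toAdd f)
  left_inv _ := rfl
  right_inv _ := rfl
  map_mul' _ _ := rfl

private lemma addAut_smul (n : ℕ) (F : AddAut (ZMod n)) (x : ZMod n) : F x = F 1 * x := by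
  rw [mul_comm, ← x.intCast_zmod_cast, ← zsmul_eq_mul, ← map_zsmul, zsmul_one]

/-- transfer of automorphisms to units of `ZMod n`. -/
private noncomputable def autUnits {G : Type*} [Group G] (n : ℕ)
    (e : Multiplicative (ZMod n) ≃* G) : MulAut G ≃* (ZMod n)ˣ :=
  (MulAut.congr e).symm.trans ((mulAutMultiplicative (ZMod n)).trans (AddEquiv.toMultiplicativeLeft (ZMod.AddAutEquivUnits n)))

private lemma autUnits_apply {G : Type*} [Group G] (n : ℕ) (e : Multiplicative (ZMod n) ≃* G)
    (σ : MulAut G) (x : ZMod n) :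
    σ (e (Multiplicative.ofAdd x)) = e (Multiplicative.ofAdd ((autUnits n e σ : ZMod n) * x)) := by
  have h1 : ((autUnits n e σ : ZMod n)) =
      (AddEquiv.toMultiplicative.symm ((MulAut.congr e).symm σ)) 1 := rfl
  rw [h1, ← addAut_smul n (AddEquiv.toMultiplicative.symm ((MulAut.congr e).symm σ)) x]
  show σ (e (Multiplicative.ofAdd x)) =
    e (Multiplicative.ofAdd (Multiplicative.toAdd (e.symm (σ (e (Multiplicative.ofAdd x))))))
  simp

/-- Let `G` be cyclic of order `2 ^ k` (`k ≥ 2`) and `N` its (unique) subgroup of order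
`2 ^ m` with `2 ≤ m < k`. Then the subgroup of `Aut(G)` consisting of automorphisms fixing
`N` pointwise is cyclic of order `2 ^ (k - m)`. -/
theorem centralizer_aut_cyclic (G : Type*) [Group G] (k m : ℕ) (hk : 2 ≤ k)
    (hm : 2 ≤ m) (hmk : m < k) (hG : IsCyclic G) (hGcard : Nat.card G = 2 ^ k)
    (N : Subgroup G) (hN : Nat.card N = 2 ^ m)
    (C : Subgroup (MulAut G)) (hC : ∀ σ : MulAut G, σ ∈ C ↔ ∀ g ∈ N, σ g = g) :
    IsCyclic C ∧ Nat.card C = 2 ^ (k - m) := by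
  classical
  haveI : Finite G := Nat.finite_of_card_ne_zero (by rw [hGcard]; positivity)
  haveI : Fintype G := Fintype.ofFinite G
  -- N is the set of elements of order dividing 2^m
  have hN' : ∀ g : G, g ∈ N ↔ g ^ (2 ^ m) = 1 := by
    have hsub : (N : Set G) ⊆ {g : G | g ^ (2 ^ m) = 1} := by
      intro g hg
      have := N.orderOf_dvd_natCard hg
      rw [hN] at this
      exact orderOf_dvd_iff_pow_eq_one.mp this
    have hfin : ({g : G | g ^ (2 ^ m) = 1}).Finite := Set.toFinite _
    have hle : ({g : G | g ^ (2 ^ m) = 1}).ncard ≤ (N : Set G).ncard := by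
      have h1 : ({g : G | g ^ (2 ^ m) = 1}).ncard ≤ 2 ^ m := by
        rw [Set.ncard_eq_toFinset_card', Set.toFinset_setOf]
        haveI : IsCyclic G := hG
        exact IsCyclic.card_pow_eq_one_le (by positivity)
      have h2 : (N : Set G).ncard = 2 ^ m := by
        rw [← Nat.card_coe_set_eq]
        simpa using hN
      omega
    have := Set.eq_of_subset_of_ncard_le hsub hle hfin
    intro g
    constructor
    · intro hg; exact hsub hg
    · intro hg; rw [← SetLike.mem_coe, this]; exact hg
  -- transfer to ZMod (2 ^ k)
  haveI : NeZero (2 ^ k) := ⟨by positivity⟩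
  have e0 := zmodCyclicMulEquiv hG
  rw [hGcard] at e0
  set e : Multiplicative (ZMod (2 ^ k)) ≃* G := e0 with he
  set Φ : MulAut G ≃* (ZMod (2 ^ k))ˣ := autUnits (2 ^ k) e with hΦ
  set f := (ZMod.unitsMap (pow_dvd_pow 2 hmk.le) : (ZMod (2 ^ k))ˣ →* (ZMod (2 ^ m))ˣ) with hf
  have hkey : ∀ σ : MulAut G, σ ∈ C ↔ Φ σ ∈ f.ker := by
    intro σ
    rw [hC σ]
    have step1 : (∀ g ∈ N, σ g = g) ↔
        (∀ x : ZMod (2 ^ k), ((2 ^ m : ℕ) : ZMod (2 ^ k)) * x = 0 →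
          ((Φ σ : ZMod (2 ^ k))) * x = x) := by
      constructor
      · intro h x hx
        have hgN : e (Multiplicative.ofAdd x) ∈ N := by
          rw [hN']
          have : (e (Multiplicative.ofAdd x)) ^ (2 ^ m) =
              e (Multiplicative.ofAdd (((2 ^ m : ℕ) : ZMod (2 ^ k)) * x)) := by
            rw [← map_pow, ← ofAdd_nsmul, nsmul_eq_mul]
          rw [this, hx]
          simp
        have := h _ hgN
        rw [autUnits_apply (2 ^ k) e σ x] at this
        have := e.injective this
        exact Multiplicative.ofAdd.injective this
      · intro h g hg
        set x : ZMod (2 ^ k) := Multiplicative.toAdd (e.symm g) with hx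
        have hgx : g = e (Multiplicative.ofAdd x) := by simp [hx]
        have hxo : ((2 ^ m : ℕ) : ZMod (2 ^ k)) * x = 0 := by
          have h1 : g ^ (2 ^ m) = 1 := (hN' g).mp hg
          rw [hgx] at h1
          have h2 : e (Multiplicative.ofAdd (((2 ^ m : ℕ) : ZMod (2 ^ k)) * x)) =
              e (Multiplicative.ofAdd (0 : ZMod (2 ^ k))) := by
            rw [← nsmul_eq_mul, ofAdd_nsmul, map_pow, h1]
            simp
          have := e.injective h2
          exact Multiplicative.ofAdd.injective this
        rw [hgx, autUnits_apply (2 ^ k) e σ x, h x hxo]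
    rw [step1, aux_fix k m hm hmk _]
    rw [MonoidHom.mem_ker, hf]
    constructor
    · intro h
      ext
      exact h
    · intro h
      have := congrArg (fun u : (ZMod (2 ^ m))ˣ => (u : ZMod (2 ^ m))) h
      exact this
  have hmap : C.map Φ.toMonoidHom = f.ker := by
    ext u
    constructor
    · rintro ⟨σ, hσ, rfl⟩
      exact (hkey σ).mp hσ
    · intro hu
      exact ⟨Φ.symm u, (hkey _).mpr (by simpa using hu), by simp⟩
  have e2 : C ≃* f.ker := (Φ.subgroupMap C).trans (MulEquiv.subgroupCongr hmap)
  obtain ⟨hcyc, hcard⟩ := aux_K k m hm hmk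
  refine ⟨?_, ?_⟩
  · exact isCyclic_of_surjective e2.symm.toMonoidHom e2.symm.surjective
  · rw [← hcard]
    exact Nat.card_congr e2.toEquiv
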